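/- For every n > k ≥ 1, there exists a simple graph G on n vertices such that the number of unordered pairs of vertices {x,y} with |deg(x) − deg(y)| < k equals f0(n,k) := (⌈n/k⌉ − 2)·C(k,2) + C(k+1,2) + C(n − k(⌈n/k⌉ − 1) − 1, 2). -/

import Mathlib

open scoped Classical

/-- Number of unordered pairs of distinct vertices whose degrees differ by less than `k`. -/
noncomputable def closeCount (n k : ℕ) (G : SimpleGraph (Fin n)) : ℕ :=
  (Finset.univ.filter (fun p : Fin n × Fin n =>
    p.1 < p.2 ∧ |(G.degree p.1 : ℤ) - (G.degree p.2 : ℤ)| < k)).card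

/-- `f0 n k`, where `(n + k - 1) / k = ⌈n/k⌉` for `k > 0`. -/
def f0 (n k : ℕ) : ℕ :=
  ((n + k - 1) / k - 2) * Nat.choose k 2 + Nat.choose (k + 1) 2 +
    Nat.choose (n - k * ((n + k - 1) / k - 1) - 1) 2

namespace Stmt3Aux

open Finset

/-- the group index of a vertex -/
def grp (k q js v : ℕ) : ℕ :=
  if v ≤ js * k then min js (v / k + 1) else min q ((v - 1) / k + 1)

/-- start index of group `j+1` -/
def cum (k js j : ℕ) : ℕ := j * k + (if js ≤ j then 1 else 0)

lemma grp_pos {k q js : ℕ} (hjs : 1 ≤ js) (hq : 1 ≤ q) (v : ℕ) : 1 ≤ grp k q js v := by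
  unfold grp
  split_ifs
  · exact le_min hjs (Nat.succ_le_succ (Nat.zero_le _))
  · exact le_min hq (Nat.succ_le_succ (Nat.zero_le _))

lemma grp_le {k q js : ℕ} (hjs : js ≤ q) (v : ℕ) : grp k q js v ≤ q := by
  unfold grp
  split_ifs
  · exact le_trans (min_le_left _ _) hjs
  · exact min_le_left _ _

lemma le_grp_iff {k q js : ℕ} (hk : 1 ≤ k) {m : ℕ} (hm : 1 ≤ m) (hmq : m ≤ q) (v : ℕ) :
    m ≤ grp k q js v ↔ cum k js (m - 1) ≤ v := by
  have hdiv : ∀ a b : ℕ, a ≤ b / k ↔ a * k ≤ b := fun a b =>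
    Nat.le_div_iff_mul_le (by omega)
  unfold grp cum
  split_ifs with h1 h2 h2
  · -- v ≤ js*k, js ≤ m-1 : both sides false
    have hmul : js * k ≤ (m - 1) * k := Nat.mul_le_mul_right k h2
    constructor
    · intro hL
      have := le_trans hL (min_le_left _ _); omega
    · intro hR; omega
  · -- v ≤ js*k, m-1 < js
    rw [le_min_iff]
    have h3 : m - 1 ≤ v / k ↔ (m - 1) * k ≤ v := hdiv _ _
    constructor
    · rintro ⟨_, hb⟩; omega
    · intro hR
      refine ⟨by omega, by omega⟩
  · -- v > js*k, js ≤ m-1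
    rw [le_min_iff]
    have h3 : m - 1 ≤ (v - 1) / k ↔ (m - 1) * k ≤ v - 1 := hdiv _ _
    constructor
    · rintro ⟨_, hb⟩; omega
    · intro hR
      refine ⟨hmq, by omega⟩
  · -- v > js*k, m-1 < js : both sides true
    rw [le_min_iff]
    have hmul : m * k ≤ js * k := Nat.mul_le_mul_right k (by omega)
    have h3 : m - 1 ≤ (v - 1) / k ↔ (m - 1) * k ≤ v - 1 := hdiv _ _
    have h4 : (m - 1) * k = m * k - k := by rw [Nat.sub_one_mul]
    constructor
    · intro _; omega
    · intro _; exact ⟨hmq, by omega⟩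

/-- counting pairs `x < y` inside a finset -/
lemma card_lt_pairs {α : Type*} [LinearOrder α] (F : Finset α) :
    ((F ×ˢ F).filter fun p => p.1 < p.2).card = F.card.choose 2 := by
  classical
  have h1 : ((F ×ˢ F).filter fun p => p.1 < p.2) = F.offDiag.filter fun p => p.1 < p.2 := by
    ext p
    simp only [mem_filter, mem_product, mem_offDiag]
    constructor
    · rintro ⟨⟨ha, hb⟩, hc⟩; exact ⟨⟨ha, hb, ne_of_lt hc⟩, hc⟩
    · rintro ⟨⟨ha, hb, _⟩, hc⟩; exact ⟨⟨ha, hb⟩, hc⟩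
  have h2 : (F.offDiag.filter fun p => p.1 < p.2).card
      = (F.offDiag.filter fun p => ¬ p.1 < p.2).card := by
    apply card_nbij' Prod.swap Prod.swap
    · intro p hp
      simp only [mem_coe, mem_filter, mem_offDiag] at hp ⊢
      obtain ⟨⟨ha, hb, hc⟩, hd⟩ := hp
      exact ⟨⟨hb, ha, hc.symm⟩, not_lt_of_gt hd⟩
    · intro p hp
      simp only [mem_coe, mem_filter, mem_offDiag] at hp ⊢
      obtain ⟨⟨ha, hb, hc⟩, hd⟩ := hp
      exact ⟨⟨hb, ha, hc.symm⟩, lt_of_le_of_ne (not_lt.mp hd) hc.symm⟩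
    · intro p _; rfl
    · intro p _; rfl
  have h3 := card_filter_add_card_filter_not (s := F.offDiag)
    (p := fun p => p.1 < p.2)
  have h4 := F.offDiag_card
  have h5 : F.card * F.card - F.card = F.card * (F.card - 1) := by
    rcases Nat.eq_zero_or_pos F.card with h | h
    · simp [h]
    · have : F.card * (F.card - 1) + F.card = F.card * F.card := by
        rw [Nat.mul_sub_one]
        have : F.card ≤ F.card * F.card := Nat.le_mul_of_pos_left _ h
        omega
      omega
  rw [Nat.choose_two_right, h1]
  omega

lemma card_filter_le_val (n a : ℕ) (ha : a ≤ n) :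
    ((univ : Finset (Fin n)).filter fun w : Fin n => a ≤ (w : ℕ)).card = n - a := by
  rw [show n - a = (Finset.Ico a n).card by rw [Nat.card_Ico]]
  apply card_nbij (fun w : Fin n => (w : ℕ))
  · intro w hw
    simp only [mem_coe, mem_filter, mem_univ, true_and] at hw
    simp [Finset.mem_Ico, hw, w.isLt]
  · intro x _ y _ h; exact Fin.val_injective h
  · intro b hb
    simp only [Finset.coe_Ico, Set.mem_Ico] at hb
    exact ⟨⟨b, hb.2⟩, by simp [hb.1], rfl⟩

end Stmt3Aux

open Stmt3Aux Finset

theorem stmt_3 (n k : ℕ) (hk : 1 ≤ k) (hnk : k < n) :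
    ∃ G : SimpleGraph (Fin n), closeCount n k G = f0 n k := by
  set q := (n + k - 1) / k with hq
  set js := (q + 1) / 2 with hjs
  -- basic facts about q
  have hdm : k * q + (n + k - 1) % k = n + k - 1 := by
    have h1 := Nat.div_add_mod (n + k - 1) k
    rw [← hq] at h1
    exact h1
  have hmd : (n + k - 1) % k < k := Nat.mod_lt _ (by omega)
  have hcomm : q * k = k * q := Nat.mul_comm _ _
  have hqk2 : n ≤ q * k := by omega
  have hq2 : 2 ≤ q := by
    rw [hq, Nat.le_div_iff_mul_le (by omega : 0 < k)]
    omega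
  have hqk1 : (q - 1) * k < n := by
    have h2 : (q - 1) * k = q * k - k := Nat.sub_one_mul _ _
    omega
  have hjsq : 1 ≤ js ∧ js ≤ q - 1 := by omega
  -- the group function
  set g : Fin n → ℕ := fun v => grp k q js (v : ℕ) with hg
  have hg1 : ∀ v, 1 ≤ g v := fun v => grp_pos hjsq.1 (by omega) _
  have hgq : ∀ v, g v ≤ q := fun v => grp_le (by omega) _
  -- the graph
  let G : SimpleGraph (Fin n) :=
    { Adj := fun u v => u ≠ v ∧ q + 1 ≤ g u + g v
      symm := by constructor; rintro u v ⟨h1, h2⟩; exact ⟨h1.symm, by omega⟩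
      loopless := by constructor; rintro u ⟨h1, _⟩; exact h1 rfl }
  refine ⟨G, ?_⟩
  -- counting vertices with group ≥ m
  have key : ∀ m, 1 ≤ m → m ≤ q →
      ((univ : Finset (Fin n)).filter fun w => m ≤ g w).card = n - cum k js (m - 1) := by
    intro m h1 h2
    have he : ((univ : Finset (Fin n)).filter fun w => m ≤ g w)
        = (univ : Finset (Fin n)).filter fun w : Fin n => cum k js (m - 1) ≤ (w : ℕ) := by
      apply filter_congr
      intro w _
      exact le_grp_iff hk h1 h2 _
    rw [he]
    apply card_filter_le_val
    -- cum k js (m-1) ≤ n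
    have hmm : (m - 1) * k ≤ (q - 1) * k := Nat.mul_le_mul_right k (by omega)
    unfold cum
    split_ifs <;> omega
  -- degree formula
  have hdeg : ∀ (v : Fin n) (inst : Fintype (G.neighborSet v)),
      @SimpleGraph.degree _ G v inst = n - 1 - (q - g v) * k := by
    intro v inst
    have hA : @SimpleGraph.neighborFinset _ G v inst
        = ((univ : Finset (Fin n)).filter fun w => q + 1 - g v ≤ g w).erase v := by
      ext w
      rw [@SimpleGraph.mem_neighborFinset _ G v inst w]
      simp only [mem_erase, mem_filter, mem_univ, true_and]
      show (v ≠ w ∧ q + 1 ≤ g v + g w) ↔ _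
      have := hg1 v; have := hgq v
      constructor
      · rintro ⟨h1, h2⟩; exact ⟨fun h => h1 h.symm, by omega⟩
      · rintro ⟨h1, h2⟩; exact ⟨fun h => h1 h.symm, by omega⟩
    have hm1 : 1 ≤ q + 1 - g v := by have := hgq v; omega
    have hm2 : q + 1 - g v ≤ q := by have := hg1 v; omega
    have hmeq : q + 1 - g v - 1 = q - g v := by have := hgq v; omega
    have hcard := key _ hm1 hm2
    rw [hmeq] at hcard
    have hmul : (q - g v) * k ≤ (q - 1) * k := Nat.mul_le_mul_right k (by have := hg1 v; omega)
    have hdd : @SimpleGraph.degree _ G v inst = (@SimpleGraph.neighborFinset _ G v inst).card := rfl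
    rw [hdd, hA]
    by_cases hv : q + 1 ≤ 2 * g v
    · -- v is in the filter set
      have hvmem : v ∈ (univ : Finset (Fin n)).filter fun w => q + 1 - g v ≤ g w := by
        simp only [mem_filter, mem_univ, true_and]; omega
      rw [card_erase_of_mem hvmem, hcard]
      have hcum : cum k js (q - g v) = (q - g v) * k := by
        unfold cum
        have hno : ¬ js ≤ q - g v := by
          have := hg1 v; have := hgq v; omega
        simp [hno]
      rw [hcum]
      omega
    · have hvmem : v ∉ (univ : Finset (Fin n)).filter fun w => q + 1 - g v ≤ g w := by
        simp only [mem_filter, mem_univ, true_and]; omega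
      rw [erase_eq_of_notMem hvmem, hcard]
      have hcum : cum k js (q - g v) = (q - g v) * k + 1 := by
        unfold cum
        have hyes : js ≤ q - g v := by
          have := hg1 v; have := hgq v; omega
        simp [hyes]
      rw [hcum]
      omega
  -- close pairs are exactly same-group pairs
  have hcc : closeCount n k G
      = ((univ : Finset (Fin n × Fin n)).filter fun p => p.1 < p.2 ∧ g p.1 = g p.2).card := by
    unfold closeCount
    congr 1
    apply filter_congr
    intro p _
    rw [hdeg p.1, hdeg p.2]
    have ha : (q - g p.1) * k ≤ (q - 1) * k := Nat.mul_le_mul_right k (by have := hg1 p.1; omega)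
    have hb : (q - g p.2) * k ≤ (q - 1) * k := Nat.mul_le_mul_right k (by have := hg1 p.2; omega)
    constructor
    · rintro ⟨h1, h2⟩
      refine ⟨h1, ?_⟩
      rw [abs_lt] at h2
      by_contra hne
      rcases lt_or_gt_of_ne hne with hlt | hlt
      · have h3 : (q - g p.1) * k ≥ (q - g p.2 + 1) * k :=
          Nat.mul_le_mul_right k (by have := hgq p.2; omega)
        rw [Nat.succ_mul] at h3
        omega
      · have h3 : (q - g p.2) * k ≥ (q - g p.1 + 1) * k :=
          Nat.mul_le_mul_right k (by have := hgq p.1; omega)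
        rw [Nat.succ_mul] at h3
        omega
    · rintro ⟨h1, h2⟩
      refine ⟨h1, ?_⟩
      rw [h2, abs_lt]
      omega
  rw [hcc]
  -- fibers
  set F : ℕ → Finset (Fin n) := fun j => (univ : Finset (Fin n)).filter fun v => g v = j
    with hF
  -- cardinality of fibers
  have hFcard : ∀ j, 1 ≤ j → j ≤ q - 1 → (F j).card = k + (if j = js then 1 else 0) := by
    intro j h1 h2
    have hsub : ((univ : Finset (Fin n)).filter fun w => j + 1 ≤ g w)
        ⊆ (univ : Finset (Fin n)).filter fun w => j ≤ g w := by
      intro w hw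
      simp only [mem_filter, mem_univ, true_and] at hw ⊢
      omega
    have hdiff : F j = ((univ : Finset (Fin n)).filter fun w => j ≤ g w)
        \ ((univ : Finset (Fin n)).filter fun w => j + 1 ≤ g w) := by
      ext w
      simp only [hF, mem_filter, mem_sdiff, mem_univ, true_and]
      omega
    rw [hdiff, card_sdiff_of_subset hsub, key j h1 (by omega), key (j + 1) (by omega) (by omega)]
    have e1 : cum k js (j + 1 - 1) = j * k + (if js ≤ j then 1 else 0) := by
      unfold cum; simp
    have e2 : cum k js (j - 1) = (j - 1) * k + (if js ≤ j - 1 then 1 else 0) := rfl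
    have e3 : (j - 1) * k = j * k - k := Nat.sub_one_mul _ _
    have e4 : j * k ≤ (q - 1) * k := Nat.mul_le_mul_right k (by omega)
    have e5 : k ≤ j * k := Nat.le_mul_of_pos_left _ (by omega)
    rw [e1, e2, e3]
    split_ifs <;> omega
  have hFq : (F q).card = n - (q - 1) * k - 1 := by
    have hempty : ((univ : Finset (Fin n)).filter fun w => q + 1 ≤ g w) = ∅ := by
      apply filter_eq_empty_iff.mpr
      intro w _
      have := hgq w; omega
    have hdiff : F q = ((univ : Finset (Fin n)).filter fun w => q ≤ g w) := by
      ext w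
      simp only [hF, mem_filter, mem_univ, true_and]
      have := hgq w; omega
    rw [hdiff, key q (by omega) le_rfl]
    have : cum k js (q - 1) = (q - 1) * k + 1 := by
      unfold cum
      simp [show js ≤ q - 1 by omega]
    omega
  -- decompose the pair count as a sum over groups
  have hdecomp : ((univ : Finset (Fin n × Fin n)).filter fun p => p.1 < p.2 ∧ g p.1 = g p.2)
      = (Icc 1 q).biUnion fun j => (F j ×ˢ F j).filter fun p => p.1 < p.2 := by
    ext p
    simp only [mem_filter, mem_univ, true_and, mem_biUnion, mem_Icc, mem_product, hF]
    constructor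
    · rintro ⟨h1, h2⟩
      exact ⟨g p.1, ⟨hg1 p.1, hgq p.1⟩, ⟨⟨rfl, h2.symm⟩, h1⟩⟩
    · rintro ⟨j, _, ⟨⟨e1, e2⟩, hlt⟩⟩
      exact ⟨hlt, e1.trans e2.symm⟩
  rw [hdecomp, card_biUnion]
  · -- compute the sum
    have hterm : ∀ j ∈ Icc 1 q, ((F j ×ˢ F j).filter fun p => p.1 < p.2).card
        = ((F j).card).choose 2 := fun j _ => card_lt_pairs (F j)
    rw [sum_congr rfl hterm]
    have hsplit : Icc 1 q = insert q (Icc 1 (q - 1)) := by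
      ext x
      simp only [mem_insert, mem_Icc]
      omega
    rw [hsplit, sum_insert (by simp; omega)]
    have hjs_mem : js ∈ Icc 1 (q - 1) := by simp; omega
    rw [← add_sum_erase _ _ hjs_mem]
    have hconst : ∀ j ∈ (Icc 1 (q - 1)).erase js, ((F j).card).choose 2 = k.choose 2 := by
      intro j hj
      simp only [mem_erase, mem_Icc] at hj
      rw [hFcard j hj.2.1 hj.2.2]
      simp [hj.1]
    rw [sum_congr rfl hconst, sum_const, card_erase_of_mem hjs_mem, Nat.card_Icc, smul_eq_mul]
    rw [hFcard js hjsq.1 hjsq.2, if_pos rfl, hFq]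
    unfold f0
    rw [← hq]
    have hmc : n - k * (q - 1) = n - (q - 1) * k := by rw [Nat.mul_comm]
    rw [hmc, show q - 1 + 1 - 1 - 1 = q - 2 from by omega]
    omega
  · -- pairwise disjointness
    intro a ha b hb hab
    simp only [disjoint_left]
    intro p hpa hpb
    simp only [mem_filter, mem_product, hF, mem_univ, true_and] at hpa hpb
    apply hab
    omega
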